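/- Let N ≥ 3 be an integer and α_N = [N(N-2)]^{(N-2)/4}. With p = (N+2)/(N-2), U(y) = α_N (1+|y|²)^{-(N-2)/2}, and ψ⁰(y) = ((N-2)/2) α_N (|y|²-1)/(1+|y|²)^{N/2}, the integral -∫_{ℝ^N} U(y)^p · ln(U(y)) · ψ⁰(y) dy equals Γ(N/2) π^{N/2} / (4 Γ(N+1)) · N^{N/2} (N-2)^{(N+4)/2}; in particular it is strictly positive. -/

import Mathlib

open Real

/-- The standard Aubin–Talenti bubble `U(y) = α_N (1+|y|²)^{-(N-2)/2}`. -/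
noncomputable def Ubub (N : ℕ) (y : EuclideanSpace ℝ (Fin N)) : ℝ :=
  ((N : ℝ) * ((N : ℝ) - 2)) ^ (((N : ℝ) - 2) / 4) * (1 + ‖y‖ ^ 2) ^ (-(((N : ℝ) - 2) / 2))

/-- `ψ⁰(y) = ((N-2)/2) α_N (|y|²-1)/(1+|y|²)^{N/2}`. -/
noncomputable def psi0 (N : ℕ) (y : EuclideanSpace ℝ (Fin N)) : ℝ :=
  (((N : ℝ) - 2) / 2) * ((N : ℝ) * ((N : ℝ) - 2)) ^ (((N : ℝ) - 2) / 4) *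
    (‖y‖ ^ 2 - 1) / (1 + ‖y‖ ^ 2) ^ ((N : ℝ) / 2)

section Aux
open MeasureTheory Set Filter Topology intervalIntegral


lemma real_beta {a b : ℝ} (ha : 0 < a) (hb : 0 < b) :
    ∫ x in (0:ℝ)..1, x ^ (a-1) * (1-x) ^ (b-1) = Gamma a * Gamma b / Gamma (a+b) := by
  have h := Complex.Gamma_mul_Gamma_eq_betaIntegral (s := (a:ℂ)) (t := (b:ℂ))
    (by simpa using ha) (by simpa using hb)
  have hB : Complex.betaIntegral a b = ((∫ x in (0:ℝ)..1, x ^ (a-1) * (1-x) ^ (b-1) : ℝ) : ℂ) := by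
    rw [Complex.betaIntegral, ← intervalIntegral.integral_ofReal]
    refine intervalIntegral.integral_congr fun x hx => ?_
    rw [uIcc_of_le zero_le_one] at hx
    rw [Complex.ofReal_mul, Complex.ofReal_cpow hx.1, Complex.ofReal_cpow (by linarith [hx.2])]
    push_cast
    ring
  rw [hB, ← Complex.ofReal_add, Complex.Gamma_ofReal, Complex.Gamma_ofReal, Complex.Gamma_ofReal,
    ← Complex.ofReal_mul, ← Complex.ofReal_mul] at h
  have h2 := Complex.ofReal_injective h
  rw [eq_div_iff (Real.Gamma_pos_of_pos (by linarith : (0:ℝ) < a + b)).ne', h2, mul_comm]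

lemma beta_Ioi {a b : ℝ} (ha : 0 < a) (hb : 0 < b) :
    ∫ t in Ioi (0:ℝ), t ^ (a-1) * (1+t) ^ (-(a+b)) = Gamma a * Gamma b / Gamma (a+b) := by
  have himg : (fun x : ℝ => x / (1-x)) '' Ioo 0 1 = Ioi 0 := by
    ext t
    constructor
    · rintro ⟨x, hx, rfl⟩
      exact div_pos hx.1 (by linarith [hx.2])
    · intro ht
      refine ⟨t / (1+t), ⟨div_pos ht (by linarith [mem_Ioi.mp ht]), ?_⟩, ?_⟩
      · rw [div_lt_one (by linarith [mem_Ioi.mp ht])]; linarith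
      · have h1t : (0:ℝ) < 1 + t := by linarith [mem_Ioi.mp ht]
        field_simp
        ring
  have hderiv : ∀ x ∈ Ioo (0:ℝ) 1, HasDerivWithinAt (fun x : ℝ => x / (1-x))
      ((1-x)⁻¹ ^ 2) (Ioo 0 1) x := by
    intro x hx
    have h1x : (1:ℝ) - x ≠ 0 := ne_of_gt (by linarith [hx.2])
    have : HasDerivAt (fun x : ℝ => x / (1-x)) ((1-x)⁻¹ ^ 2) x := by
      have := (hasDerivAt_id x).div ((hasDerivAt_id x).const_sub 1) h1x
      refine this.congr_deriv ?_
      simp only [id]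
      field_simp
      ring
    exact this.hasDerivWithinAt
  have hinj : InjOn (fun x : ℝ => x / (1-x)) (Ioo 0 1) := by
    intro x hx y hy hxy
    have h1x : (0:ℝ) < 1 - x := by linarith [hx.2]
    have h1y : (0:ℝ) < 1 - y := by linarith [hy.2]
    simp only [div_eq_div_iff h1x.ne' h1y.ne'] at hxy
    nlinarith [hxy]
  rw [← himg, integral_image_eq_integral_abs_deriv_smul measurableSet_Ioo hderiv hinj]
  have : ∀ x ∈ Ioo (0:ℝ) 1, |(1-x)⁻¹ ^ 2| • ((x/(1-x)) ^ (a-1) * (1+x/(1-x)) ^ (-(a+b)))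
      = x ^ (a-1) * (1-x) ^ (b-1) := by
    intro x hx
    have hx0 : (0:ℝ) < x := hx.1
    have hx1 : (0:ℝ) < 1 - x := by linarith [hx.2]
    have h1 : 1 + x/(1-x) = (1-x)⁻¹ := by field_simp; ring
    rw [smul_eq_mul, abs_of_nonneg (by positivity), h1, div_rpow hx0.le hx1.le,
      ← Real.rpow_neg_one (1-x), ← Real.rpow_natCast ((1-x)^(-1:ℝ)) 2,
      ← Real.rpow_mul hx1.le, ← Real.rpow_mul (by positivity),
      div_eq_mul_inv, ← Real.rpow_neg hx1.le]
    calc (1-x) ^ (-1*((2:ℕ):ℝ)) * (x ^ (a-1) * (1-x) ^ (-(a-1)) * (1-x) ^ (-1 * -(a+b)))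
        = x ^ (a-1) * ((1-x) ^ (-1*((2:ℕ):ℝ)) * ((1-x) ^ (-(a-1)) * (1-x) ^ (-1 * -(a+b)))) := by
          ring
      _ = x ^ (a-1) * (1-x) ^ (-1*((2:ℕ):ℝ) + (-(a-1) + -1 * -(a+b))) := by
          rw [← Real.rpow_add hx1, ← Real.rpow_add hx1]
      _ = x ^ (a-1) * (1-x) ^ (b-1) := by
          rw [show (-1*((2:ℕ):ℝ) + (-(a-1) + -1 * -(a+b))) = b - 1 by push_cast; ring]
  rw [setIntegral_congr_fun measurableSet_Ioo this]
  rw [← real_beta ha hb, intervalIntegral.integral_of_le zero_le_one,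
    integral_Ioc_eq_integral_Ioo]

lemma beta_r (N : ℕ) (hN : 3 ≤ N) :
    ∫ r in Ioi (0:ℝ), r ^ (N+1) * ((1+r^2) ^ (N+1))⁻¹
      = Gamma ((N:ℝ)/2+1) * Gamma ((N:ℝ)/2) / (2 * Gamma ((N:ℝ)+1)) := by
  have hNpos : (0:ℝ) < N := by positivity
  set g : ℝ → ℝ := fun t => (1/2) * (t ^ ((N:ℝ)/2) * (1+t) ^ (-((N:ℝ)+1))) with hg
  have key := MeasureTheory.integral_comp_rpow_Ioi g (p := 2) two_ne_zero
  have hcongr : ∀ x ∈ Ioi (0:ℝ),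
      (|2| * x ^ ((2:ℝ) - 1)) • g (x ^ (2:ℝ)) = x ^ (N+1) * ((1+x^2) ^ (N+1))⁻¹ := by
    intro x hx
    have hx0 : (0:ℝ) < x := hx
    have hx2 : x ^ (2:ℝ) = x ^ (2:ℕ) := by
      rw [show (2:ℝ) = ((2:ℕ):ℝ) by norm_num, Real.rpow_natCast]
    have h1x2 : (0:ℝ) < 1 + x^(2:ℕ) := by positivity
    have hxN : (x ^ (2:ℕ)) ^ ((N:ℝ)/2) = x ^ (N:ℕ) := by
      rw [← Real.rpow_natCast x 2, ← Real.rpow_mul hx0.le,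
        show ((2:ℕ):ℝ) * ((N:ℝ)/2) = ((N:ℕ):ℝ) by push_cast; ring, Real.rpow_natCast]
    have hneg : (1 + x^(2:ℕ)) ^ (-((N:ℝ)+1)) = ((1+x^(2:ℕ)) ^ (N+1:ℕ))⁻¹ := by
      rw [Real.rpow_neg h1x2.le, show ((N:ℝ)+1) = ((N+1:ℕ):ℝ) by push_cast; ring,
        Real.rpow_natCast]
    simp only [smul_eq_mul, hg]
    rw [hx2, hxN, hneg, show ((2:ℝ)-1) = (1:ℝ) by norm_num, Real.rpow_one,
      abs_of_pos (by norm_num : (0:ℝ) < 2), pow_succ]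
    ring
  rw [setIntegral_congr_fun measurableSet_Ioi hcongr] at key
  rw [key, hg]
  simp only [MeasureTheory.integral_const_mul]
  have hb := beta_Ioi (a := (N:ℝ)/2 + 1) (b := (N:ℝ)/2) (by positivity) (by positivity)
  rw [show ((N:ℝ)/2 + 1 - 1) = (N:ℝ)/2 by ring, show ((N:ℝ)/2 + 1 + (N:ℝ)/2) = (N:ℝ)+1 by ring]
    at hb
  rw [hb]
  ring

lemma aux1 {k m : ℕ} (h : k + 2 ≤ 2*m) :
    IntegrableOn (fun r : ℝ => r^k * ((1+r^2)^m)⁻¹) (Ioi 0) := by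
  have hcont : Continuous (fun r : ℝ => r^k * ((1+r^2)^m)⁻¹) := by
    refine continuous_pow k |>.mul (Continuous.inv₀ (by continuity) ?_)
    intro x; positivity
  have h1 : IntegrableOn (fun r : ℝ => r^k * ((1+r^2)^m)⁻¹) (Ioc 0 1) :=
    (hcont.integrableOn_Icc (a := 0) (b := 1)).mono_set Ioc_subset_Icc_self
  have h2 : IntegrableOn (fun r : ℝ => r^k * ((1+r^2)^m)⁻¹) (Ioi 1) := by
    refine Integrable.mono' ((integrableOn_Ioi_rpow_of_lt
      (a := (k:ℝ) - 2*m) ?_ (c := 1) one_pos)) hcont.aestronglyMeasurable.restrict ?_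
    · have : (k:ℝ) + 2 ≤ 2*m := by exact_mod_cast h
      linarith
    · filter_upwards [MeasureTheory.ae_restrict_mem measurableSet_Ioi] with r hr
      have hr1 : (1:ℝ) < r := hr
      have hr0 : (0:ℝ) < r := by linarith
      have hle : (r^2)^m ≤ (1+r^2)^m := by
        apply pow_le_pow_left₀ (by positivity); linarith [sq_nonneg r]
      have : r^k * ((1+r^2)^m)⁻¹ ≤ r^k * ((r^2)^m)⁻¹ := by
        apply mul_le_mul_of_nonneg_left _ (by positivity)
        exact inv_anti₀ (by positivity) hle
      rw [Real.norm_eq_abs, abs_of_nonneg (by positivity)]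
      refine this.trans (le_of_eq ?_)
      rw [← pow_mul, ← Real.rpow_natCast r k, ← Real.rpow_natCast r (2*m),
        ← Real.rpow_neg hr0.le, ← Real.rpow_add hr0]
      push_cast
      ring_nf
  have : Ioi (0:ℝ) = Ioc 0 1 ∪ Ioi 1 := (Ioc_union_Ioi_eq_Ioi zero_le_one).symm
  rw [this]
  exact h1.union h2

lemma aux2 {k m : ℕ} (h : k + 4 ≤ 2*m) :
    IntegrableOn (fun r : ℝ => r^k * ((1+r^2)^m)⁻¹ * Real.log (1+r^2)) (Ioi 0) := by
  have hm : 1 ≤ m := by omega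
  have hcont : Continuous (fun r : ℝ => r^k * ((1+r^2)^m)⁻¹ * Real.log (1+r^2)) := by
    refine Continuous.mul (continuous_pow k |>.mul (Continuous.inv₀ (by continuity) ?_)) ?_
    · intro x; positivity
    · exact (continuous_const.add (continuous_pow 2)).log (by intro x; simp only [Pi.add_apply]; positivity)
  refine Integrable.mono' (aux1 (k := k) (m := m - 1) (by omega))
    hcont.aestronglyMeasurable.restrict ?_
  filter_upwards [MeasureTheory.ae_restrict_mem measurableSet_Ioi] with r hr
  have hr0 : (0:ℝ) < r := hr
  have h1r : (0:ℝ) < 1 + r^2 := by positivity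
  have hlog : (0:ℝ) ≤ Real.log (1+r^2) := Real.log_nonneg (by nlinarith)
  rw [Real.norm_eq_abs, abs_of_nonneg (by positivity)]
  have hlog2 : Real.log (1+r^2) ≤ 1+r^2 :=
    (Real.log_le_sub_one_of_pos h1r).trans (by linarith)
  have hpow : (1+r^2)^m = (1+r^2)^(m-1) * (1+r^2) := by
    conv_lhs => rw [show m = (m-1) + 1 by omega]
    rw [pow_succ]
  calc r^k * ((1+r^2)^m)⁻¹ * Real.log (1+r^2)
      ≤ r^k * ((1+r^2)^m)⁻¹ * (1+r^2) := by
        apply mul_le_mul_of_nonneg_left hlog2 (by positivity)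
    _ = r^k * ((1+r^2)^(m-1))⁻¹ := by
        rw [hpow, mul_inv]
        field_simp


lemma radial (N : ℕ) (hN : 3 ≤ N) (A c₁ c₂ : ℝ) :
    ∫ r in Ioi (0:ℝ),
        r^(N-1) * (A * c₂ * (r^2-1) * ((1+r^2)^(N+1))⁻¹ * (c₁ - c₂ * Real.log (1+r^2)))
      = -(2*A*c₂^2/N) * (Gamma ((N:ℝ)/2+1) * Gamma ((N:ℝ)/2) / (2 * Gamma ((N:ℝ)+1))) := by
  set f : ℝ → ℝ := fun r =>
    r^(N-1) * (A * c₂ * (r^2-1) * ((1+r^2)^(N+1))⁻¹ * (c₁ - c₂ * Real.log (1+r^2))) with hf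
  set h : ℝ → ℝ := fun r => r^(N+1) * ((1+r^2)^(N+1))⁻¹ with hh
  set Φ : ℝ → ℝ := fun r =>
    -(A*c₂/N) * (r^N * ((1+r^2)^N)⁻¹ * (c₁ - c₂ * Real.log (1+r^2))) with hΦ
  -- integrability of f
  have hfint : IntegrableOn f (Ioi 0) := by
    have i1 := aux1 (k := N+1) (m := N+1) (by omega)
    have i2 := aux1 (k := N-1) (m := N+1) (by omega)
    have i3 := aux2 (k := N+1) (m := N+1) (by omega)
    have i4 := aux2 (k := N-1) (m := N+1) (by omega)
    have : f = fun r => (A*c₂*c₁) * (r^(N+1) * ((1+r^2)^(N+1))⁻¹)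
        - (A*c₂*c₁) * (r^(N-1) * ((1+r^2)^(N+1))⁻¹)
        - (A*c₂*c₂) * (r^(N+1) * ((1+r^2)^(N+1))⁻¹ * Real.log (1+r^2))
        + (A*c₂*c₂) * (r^(N-1) * ((1+r^2)^(N+1))⁻¹ * Real.log (1+r^2)) := by
      funext r
      have hr2 : r^(N+1) = r^(N-1) * r^2 := by
        rw [← pow_add]; congr 1; omega
      simp only [hf, hr2]
      ring
    rw [this]
    exact (((i1.const_mul _).sub (i2.const_mul _)).sub (i3.const_mul _)).add (i4.const_mul _)
  have hhint : IntegrableOn h (Ioi 0) := aux1 (k := N+1) (m := N+1) (by omega)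
  -- derivative
  have hderiv : ∀ x ∈ Ioi (0:ℝ), HasDerivAt Φ (f x + (2*A*c₂^2/N) * h x) x := by
    intro x _
    have h1x2 : (0:ℝ) < 1 + x^2 := by positivity
    have h2 : HasDerivAt (fun r : ℝ => 1 + r^2) (2*x) x := by
      simpa [mul_comm] using (hasDerivAt_pow 2 x).const_add 1
    have h3 := h2.pow N
    have h4 := h3.inv (pow_ne_zero N h1x2.ne')
    have h5 := h2.log h1x2.ne'
    have h6 := (h5.const_mul c₂).const_sub c₁
    have h7 := (hasDerivAt_pow N x).mul h4
    have h8 := (h7.mul h6).const_mul (-(A*c₂/N))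
    refine h8.congr_deriv ?_
    obtain ⟨n, rfl⟩ : ∃ n, N = 3 + n := ⟨N - 3, by omega⟩
    have e1 : 3 + n - 1 = n + 2 := by omega
    have e2 : 3 + n + 1 = n + 4 := by omega
    have e3 : (((3 + n : ℕ)) : ℝ) = (n:ℝ) + 3 := by push_cast; ring
    have hNne : ((n:ℝ) + 3) ≠ 0 := by positivity
    simp only [hf, hh, Pi.mul_apply, Pi.inv_apply, Pi.pow_apply, e1, e2, e3, show 3 + n = n + 3 from by omega,
      show n + 3 - 1 = n + 2 from by omega, show n + 3 + 1 = n + 4 from by omega,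
      Nat.cast_add, Nat.cast_ofNat]
    have hne : ((1:ℝ)+x^2) ≠ 0 := h1x2.ne'
    field_simp
    ring
  -- continuity of Φ at 0
  have hΦcont : Continuous Φ := by
    refine continuous_const.mul (Continuous.mul (Continuous.mul (continuous_pow N)
      (Continuous.inv₀ (by continuity) fun x => by positivity)) ?_)
    exact continuous_const.sub (continuous_const.mul
      ((continuous_const.add (continuous_pow 2)).log fun x => by simp only [Pi.add_apply]; positivity))
  -- tendsto at top
  have htop : Tendsto Φ atTop (𝓝 0) := by
    have hK : Tendsto (fun r : ℝ => (|(-(A*c₂/(N:ℝ)))| * (|c₁|+|c₂|)) * r⁻¹) atTop (𝓝 0) := by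
      simpa using tendsto_inv_atTop_zero.const_mul (|(-(A*c₂/(N:ℝ)))| * (|c₁|+|c₂|))
    apply squeeze_zero_norm' ?_ hK
    filter_upwards [eventually_ge_atTop (1:ℝ)] with r hr
    have hr0 : (0:ℝ) < r := lt_of_lt_of_le one_pos hr
    have h1r : (0:ℝ) < 1 + r^2 := by positivity
    have hlog0 : (0:ℝ) ≤ Real.log (1+r^2) := Real.log_nonneg (by nlinarith)
    have hV : |c₁ - c₂ * Real.log (1+r^2)| ≤ (|c₁|+|c₂|) * (1+r^2) := by
      refine (abs_sub _ _).trans ?_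
      rw [abs_mul, abs_of_nonneg hlog0]
      have l2 : Real.log (1+r^2) ≤ 1+r^2 := (Real.log_le_sub_one_of_pos h1r).trans (by linarith)
      have l3 : |c₂| * Real.log (1+r^2) ≤ |c₂| * (1+r^2) :=
        mul_le_mul_of_nonneg_left l2 (abs_nonneg _)
      nlinarith [abs_nonneg c₁, sq_nonneg r]
    have hX : r^N * ((1+r^2)^N)⁻¹ * (1+r^2) ≤ r⁻¹ := by
      have hsplit : (1+r^2)^N = (1+r^2)^(N-1) * (1+r^2) := by
        conv_lhs => rw [show N = (N-1)+1 from by omega, pow_succ]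
      calc r^N * ((1+r^2)^N)⁻¹ * (1+r^2)
          = r^N * ((1+r^2)^(N-1))⁻¹ := by
            rw [hsplit, mul_inv]
            field_simp
        _ ≤ r^N * ((r^2)^(N-1))⁻¹ := by
            refine mul_le_mul_of_nonneg_left (inv_anti₀ (by positivity) ?_) (by positivity)
            exact pow_le_pow_left₀ (by positivity) (by linarith [sq_nonneg r]) _
        _ = (r^(N-2))⁻¹ := by
            rw [← pow_mul, show 2*(N-1) = N + (N-2) from by omega, pow_add, mul_inv]
            field_simp
        _ ≤ r⁻¹ := inv_anti₀ hr0 (le_self_pow₀ hr (by omega))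
    have e : ‖Φ r‖ = |(-(A*c₂/(N:ℝ)))| *
        ((r^N * ((1+r^2)^N)⁻¹) * |c₁ - c₂ * Real.log (1+r^2)|) := by
      simp only [hΦ, Real.norm_eq_abs]
      rw [abs_mul, abs_mul, abs_of_nonneg (show (0:ℝ) ≤ r^N * ((1+r^2)^N)⁻¹ by positivity)]
    rw [e]
    have step : (r^N * ((1+r^2)^N)⁻¹) * |c₁ - c₂ * Real.log (1+r^2)| ≤ (|c₁|+|c₂|) * r⁻¹ := by
      calc (r^N * ((1+r^2)^N)⁻¹) * |c₁ - c₂ * Real.log (1+r^2)|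
          ≤ (r^N * ((1+r^2)^N)⁻¹) * ((|c₁|+|c₂|) * (1+r^2)) :=
            mul_le_mul_of_nonneg_left hV (by positivity)
        _ = (|c₁|+|c₂|) * (r^N * ((1+r^2)^N)⁻¹ * (1+r^2)) := by ring
        _ ≤ (|c₁|+|c₂|) * r⁻¹ := mul_le_mul_of_nonneg_left hX (by positivity)
    calc |(-(A*c₂/(N:ℝ)))| * ((r^N * ((1+r^2)^N)⁻¹) * |c₁ - c₂ * Real.log (1+r^2)|)
        ≤ |(-(A*c₂/(N:ℝ)))| * ((|c₁|+|c₂|) * r⁻¹) :=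
          mul_le_mul_of_nonneg_left step (abs_nonneg _)
      _ = (|(-(A*c₂/(N:ℝ)))| * (|c₁|+|c₂|)) * r⁻¹ := by ring
  -- FTC
  have hint' : IntegrableOn (fun x => f x + (2*A*c₂^2/N) * h x) (Ioi 0) :=
    hfint.add (hhint.const_mul _)
  have hFTC := integral_Ioi_of_hasDerivAt_of_tendsto (a := 0) (m := 0)
    hΦcont.continuousWithinAt hderiv hint' htop
  have hΦ0 : Φ 0 = 0 := by
    simp [hΦ, zero_pow (show N ≠ 0 by omega)]
  rw [hΦ0, sub_zero] at hFTC
  rw [integral_add hfint (hhint.const_mul (2*A*c₂^2/(N:ℝ))),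
    MeasureTheory.integral_const_mul] at hFTC
  simp only [hh] at hFTC
  rw [beta_r N hN] at hFTC
  linarith [hFTC]


theorem stmt5 (N : ℕ) (hN : 3 ≤ N) :
    -∫ y : EuclideanSpace ℝ (Fin N),
        Ubub N y ^ (((N : ℝ) + 2) / ((N : ℝ) - 2)) * Real.log (Ubub N y) * psi0 N y =
      Real.Gamma ((N : ℝ) / 2) * Real.pi ^ ((N : ℝ) / 2) / (4 * Real.Gamma ((N : ℝ) + 1)) *
        ((N : ℝ) ^ ((N : ℝ) / 2) * ((N : ℝ) - 2) ^ (((N : ℝ) + 4) / 2)) ∧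
    0 < -∫ y : EuclideanSpace ℝ (Fin N),
          Ubub N y ^ (((N : ℝ) + 2) / ((N : ℝ) - 2)) * Real.log (Ubub N y) * psi0 N y := by
  have hNr3 : (3:ℝ) ≤ (N:ℝ) := by exact_mod_cast hN
  have hRHSpos : (0:ℝ) <
      Real.Gamma ((N : ℝ) / 2) * Real.pi ^ ((N : ℝ) / 2) / (4 * Real.Gamma ((N : ℝ) + 1)) *
        ((N : ℝ) ^ ((N : ℝ) / 2) * ((N : ℝ) - 2) ^ (((N : ℝ) + 4) / 2)) := by
    have hG2 : (0:ℝ) < Gamma ((N:ℝ)/2) := Real.Gamma_pos_of_pos (by positivity)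
    have hG3 : (0:ℝ) < Gamma ((N:ℝ)+1) := Real.Gamma_pos_of_pos (by positivity)
    have h1 : (0:ℝ) < π ^ ((N:ℝ)/2) := Real.rpow_pos_of_pos pi_pos _
    have h2 : (0:ℝ) < (N:ℝ) ^ ((N:ℝ)/2) := Real.rpow_pos_of_pos (by linarith) _
    have h3 : (0:ℝ) < ((N:ℝ)-2) ^ (((N:ℝ)+4)/2) := Real.rpow_pos_of_pos (by linarith) _
    exact mul_pos (div_pos (mul_pos hG2 h1) (by linarith)) (mul_pos h2 h3)
  suffices heq : -∫ y : EuclideanSpace ℝ (Fin N),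
        Ubub N y ^ (((N : ℝ) + 2) / ((N : ℝ) - 2)) * Real.log (Ubub N y) * psi0 N y =
      Real.Gamma ((N : ℝ) / 2) * Real.pi ^ ((N : ℝ) / 2) / (4 * Real.Gamma ((N : ℝ) + 1)) *
        ((N : ℝ) ^ ((N : ℝ) / 2) * ((N : ℝ) - 2) ^ (((N : ℝ) + 4) / 2)) by
    exact ⟨heq, heq ▸ hRHSpos⟩
  haveI : Nonempty (Fin N) := ⟨⟨0, by omega⟩⟩
  have hN3 : (3:ℝ) ≤ (N:ℝ) := by exact_mod_cast hN
  have hN2 : (0:ℝ) < (N:ℝ) - 2 := by linarith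
  have hNd : ((N:ℝ) - 2) ≠ 0 := hN2.ne'
  have hN0 : (0:ℝ) < (N:ℝ) := by linarith
  have hNN2 : (0:ℝ) < (N:ℝ) * ((N:ℝ) - 2) := by positivity
  set α : ℝ := ((N:ℝ)*((N:ℝ)-2)) ^ (((N:ℝ)-2)/4) with hα
  set A : ℝ := ((N:ℝ)*((N:ℝ)-2)) ^ ((N:ℝ)/2) with hAdef
  set c₁ : ℝ := Real.log α with hc₁
  set c₂ : ℝ := ((N:ℝ)-2)/2 with hc₂
  set f : ℝ → ℝ := fun r =>
    A * c₂ * (r^2-1) * ((1+r^2)^(N+1))⁻¹ * (c₁ - c₂ * Real.log (1+r^2)) with hfdef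
  have hαpos : (0:ℝ) < α := by rw [hα]; positivity
  -- pointwise identity
  have key : ∀ y : EuclideanSpace ℝ (Fin N),
      Ubub N y ^ (((N:ℝ)+2)/((N:ℝ)-2)) * Real.log (Ubub N y) * psi0 N y = f ‖y‖ := by
    intro y
    have ht : (0:ℝ) ≤ ‖y‖^2 := sq_nonneg _
    set t : ℝ := ‖y‖^2 with htdef
    have h1t : (0:ℝ) < 1 + t := by positivity
    have e1 : Ubub N y ^ (((N:ℝ)+2)/((N:ℝ)-2))
        = ((N:ℝ)*((N:ℝ)-2)) ^ (((N:ℝ)+2)/4) * (1+t) ^ (-(((N:ℝ)+2)/2)) := by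
      simp only [Ubub, ← htdef]
      rw [Real.mul_rpow (by positivity) (by positivity),
        ← Real.rpow_mul hNN2.le, ← Real.rpow_mul h1t.le]
      congr 1
      · congr 1; field_simp
      · congr 1; field_simp
    have e2 : Real.log (Ubub N y) = c₁ - c₂ * Real.log (1+t) := by
      simp only [Ubub, ← htdef, ← hα]
      rw [Real.log_mul hαpos.ne' (Real.rpow_pos_of_pos h1t _).ne',
        Real.log_rpow h1t, hc₁]
      ring
    have e3 : psi0 N y = (c₂ * α * (t-1)) * ((1+t) ^ ((N:ℝ)/2))⁻¹ := by
      simp only [psi0, ← htdef, ← hα, ← hc₂]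
      rw [div_eq_mul_inv]
    rw [e1, e2, e3]
    have e4 : ((N:ℝ)*((N:ℝ)-2)) ^ (((N:ℝ)+2)/4) * α = A := by
      rw [hα, hAdef, ← Real.rpow_add hNN2]
      congr 1; ring
    have e5 : (1+t) ^ (-(((N:ℝ)+2)/2)) * ((1+t) ^ ((N:ℝ)/2))⁻¹
        = ((1+t)^(N+1))⁻¹ := by
      rw [← Real.rpow_neg h1t.le, ← Real.rpow_add h1t,
        show (-(((N:ℝ)+2)/2) + -((N:ℝ)/2)) = -(((N+1:ℕ):ℝ)) by push_cast; ring,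
        Real.rpow_neg h1t.le, Real.rpow_natCast]
    have e6 : f ‖y‖ = A * c₂ * (t-1) * ((1+t)^(N+1))⁻¹ * (c₁ - c₂ * Real.log (1+t)) := by
      simp only [hfdef, ← htdef]
    rw [e6, ← e4, ← e5]
    ring
  simp only [key]
  -- polar coordinates
  have hpolar := MeasureTheory.integral_fun_norm_addHaar
    (volume : Measure (EuclideanSpace ℝ (Fin N))) f
  rw [finrank_euclideanSpace_fin] at hpolar
  rw [hpolar]
  have hvol : ((volume : Measure (EuclideanSpace ℝ (Fin N)))
      (Metric.ball 0 1)).toReal = Real.sqrt π ^ N / Gamma ((N:ℝ)/2+1) := by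
    rw [EuclideanSpace.volume_ball, Fintype.card_fin]
    simp
    exact div_nonneg (by positivity)
      (Real.Gamma_pos_of_pos (by positivity : (0:ℝ) < (N:ℝ)/2+1)).le
  rw [measureReal_def, hvol]
  have hrad := radial N hN A c₁ c₂
  have hint : ∫ r in Ioi (0:ℝ), r^(N-1) • f r
      = -(2*A*c₂^2/N) * (Gamma ((N:ℝ)/2+1) * Gamma ((N:ℝ)/2) / (2 * Gamma ((N:ℝ)+1))) := by
    rw [← hrad]
    refine setIntegral_congr_fun measurableSet_Ioi fun r _ => ?_
    simp only [smul_eq_mul, hfdef]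
    try ring
  rw [hint]
  -- final arithmetic
  have hG1 : (0:ℝ) < Gamma ((N:ℝ)/2+1) := Real.Gamma_pos_of_pos (by positivity)
  have hG2 : (0:ℝ) < Gamma ((N:ℝ)/2) := Real.Gamma_pos_of_pos (by positivity)
  have hG3 : (0:ℝ) < Gamma ((N:ℝ)+1) := Real.Gamma_pos_of_pos (by positivity)
  have hπ : Real.sqrt π ^ N = π ^ ((N:ℝ)/2) := by
    rw [Real.sqrt_eq_rpow, ← Real.rpow_natCast (π ^ ((1:ℝ)/2)) N, ← Real.rpow_mul pi_pos.le]
    congr 1; push_cast; ring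
  have hA2 : A = (N:ℝ)^((N:ℝ)/2) * ((N:ℝ)-2)^((N:ℝ)/2) :=
    Real.mul_rpow hN0.le hN2.le
  have h2 : ((N:ℝ)-2) ^ (((N:ℝ)+4)/2) = ((N:ℝ)-2)^((N:ℝ)/2) * ((N:ℝ)-2)^(2:ℕ) := by
    rw [← Real.rpow_natCast ((N:ℝ)-2) 2, ← Real.rpow_add hN2]
    congr 1; push_cast; ring
  have hπpos : (0:ℝ) < π ^ ((N:ℝ)/2) := Real.rpow_pos_of_pos pi_pos _
  have hNpow : (0:ℝ) < (N:ℝ)^((N:ℝ)/2) := Real.rpow_pos_of_pos hN0 _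
  have hN2pow : (0:ℝ) < ((N:ℝ)-2)^((N:ℝ)/2) := Real.rpow_pos_of_pos hN2 _
  rw [nsmul_eq_mul, smul_eq_mul, hπ, hA2, h2, hc₂]
  field_simp
  ring

end Aux
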